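/- Let I be a countable index set, let (q_i)_{i∈I} be a family of (not necessarily distinct) primes, and let G = ⨁_{i∈I} ℤ/q_iℤ. Let X be an ergodic G-system and let F : X → S¹ be a phase polynomial of degree < k. Let n = p₁ ⋯ p_j be a product of j distinct primes each strictly greater than k, and suppose F(x)^n = 1 for μ-a.e. x. Then for every g ∈ G, the product ∏_{t=0}^{n−1} F(T_g^t x) equals 1 for μ-a.e. x. -/
import Mathlib


open MeasureTheory
open scoped symmDiff

noncomputable instance : MeasurableSpace Circle := borel Circle
instance : BorelSpace Circle := ⟨rfl⟩

/-- `φ : X → H` is a phase polynomial of degree `< k` with respect to the action `T` of `G`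
on the measure space `(X, μ)`: all `k`-fold multiplicative derivatives
`Δ_{h₁} ⋯ Δ_{h_k} φ` equal `1` almost everywhere, where `Δ_g φ = (φ ∘ T_g) · φ⁻¹`. -/
def PhasePoly {G X H : Type*} [MeasurableSpace X] [CommGroup H]
    (T : G → X → X) (μ : Measure X) : ℕ → (X → H) → Prop
  | 0, φ => ∀ᵐ x ∂μ, φ x = 1
  | (k + 1), φ => ∀ g : G, PhasePoly T μ k (fun x => φ (T g x) * (φ x)⁻¹)

/-- The action `T` of `G` on `(X, μ)` is ergodic: every measurable set that is invariant
modulo null sets under every `T g` has measure `0` or `1`. -/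
def IsErgodicAction {G X : Type*} [MeasurableSpace X] (T : G → X → X)
    (μ : Measure X) : Prop :=
  ∀ A : Set X, MeasurableSet A → (∀ g : G, μ ((T g ⁻¹' A) ∆ A) = 0) → μ A = 0 ∨ μ A = 1



section Aux

variable {X : Type*} [MeasurableSpace X] {μ : Measure X}

/-- multiplicative derivative along a single map -/
private noncomputable def Dd (S : X → X) (φ : X → Circle) : X → Circle :=
  fun x => φ (S x) * (φ x)⁻¹

private lemma ae_comp_mp {f : X → X} (hf : MeasurePreserving f μ μ) {p : X → Prop}
    (h : ∀ᵐ x ∂μ, p x) : ∀ᵐ x ∂μ, p (f x) :=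
  hf.quasiMeasurePreserving.tendsto_ae.eventually h

private lemma hockey (m : ℕ) : ∀ n : ℕ, ∑ t ∈ Finset.range n, t.choose m = n.choose (m + 1) := by
  intro n
  induction n with
  | zero => simp
  | succ n ih => rw [Finset.sum_range_succ, ih, Nat.choose_succ_succ, add_comm]

private lemma pascal_prod {M : Type*} [CommMonoid M] (a : ℕ → M) (k t : ℕ) :
    (∏ m ∈ Finset.range k, a (m + 1) ^ t.choose m) *
      ∏ m ∈ Finset.range (k + 1), a m ^ t.choose m
      = ∏ m ∈ Finset.range (k + 1), a m ^ (t + 1).choose m := by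
  rw [Finset.prod_range_succ' (fun m => a m ^ t.choose m) k,
    Finset.prod_range_succ' (fun m => a m ^ (t + 1).choose m) k]
  have h : ∀ m, a (m + 1) ^ (t + 1).choose (m + 1)
      = a (m + 1) ^ t.choose m * a (m + 1) ^ t.choose (m + 1) := fun m => by
    rw [Nat.choose_succ_succ, pow_add]
  rw [Finset.prod_congr rfl fun m _ => h m, Finset.prod_mul_distrib]
  simp [mul_assoc]

private lemma taylor {G : Type*} (T : G → X → X) (hT : ∀ g, MeasurePreserving (T g) μ μ) :
    ∀ (k : ℕ) (φ : X → Circle) (g : G), PhasePoly T μ k φ →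
      ∀ᵐ x ∂μ, ∀ t : ℕ, φ ((T g)^[t] x)
        = ∏ m ∈ Finset.range k, ((Dd (T g))^[m] φ) x ^ t.choose m := by
  intro k
  induction k with
  | zero =>
    intro φ g hφ
    have : ∀ t : ℕ, ∀ᵐ x ∂μ, φ ((T g)^[t] x) = 1 :=
      fun t => ae_comp_mp ((hT g).iterate t) hφ
    filter_upwards [ae_all_iff.2 this] with x hx t
    simpa using hx t
  | succ k ih =>
    intro φ g hφ
    have hD : PhasePoly T μ k (Dd (T g) φ) := hφ g
    filter_upwards [ih (Dd (T g) φ) g hD] with x hx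
    intro t
    induction t with
    | zero =>
      simp [Finset.prod_range_succ' (fun m => ((Dd (T g))^[m] φ) x ^ Nat.choose 0 m) k]
    | succ t iht =>
      rw [Function.iterate_succ_apply']
      have key : φ (T g ((T g)^[t] x))
          = (Dd (T g) φ) ((T g)^[t] x) * φ ((T g)^[t] x) := by
        simp [Dd, mul_assoc]
      rw [key, hx t, iht]
      have : ∀ m, ((Dd (T g))^[m] (Dd (T g) φ)) x = ((Dd (T g))^[m + 1] φ) x := by
        intro m; rw [Function.iterate_succ_apply]
      simp only [this]
      exact pascal_prod (fun m => ((Dd (T g))^[m] φ) x) k t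

private lemma pow_n_iter {G : Type*} (T : G → X → X) (hT : ∀ g, MeasurePreserving (T g) μ μ)
    (φ : X → Circle) (n : ℕ) (hφ : ∀ᵐ x ∂μ, φ x ^ n = 1) (g : G) :
    ∀ m : ℕ, ∀ᵐ x ∂μ, ((Dd (T g))^[m] φ) x ^ n = 1 := by
  intro m
  induction m with
  | zero => simpa using hφ
  | succ m ih =>
    have h2 : ∀ᵐ x ∂μ, ((Dd (T g))^[m] φ) (T g x) ^ n = 1 := ae_comp_mp (hT g) ih
    filter_upwards [ih, h2] with x h1 h2
    rw [Function.iterate_succ_apply']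
    simp [Dd, mul_pow, inv_pow, h1, h2]

end Aux


/-- Let `G = ⨁_{i∈I} ℤ/q_iℤ` for a countable family of primes `(q_i)`,
let `X` be an ergodic `G`-system and `F : X → S¹` a phase polynomial of degree `< k`.  Let
`n = p₁ ⋯ p_j` be a product of `j` distinct primes, each strictly greater than `k`, and
suppose `F(x)^n = 1` a.e.  Then for every `g ∈ G`, `∏_{t=0}^{n-1} F(T_g^t x) = 1` a.e. -/
theorem phase_polynomial_line_cocycle
    {I : Type*} [Countable I] (q : I → ℕ) (hq : ∀ i, (q i).Prime)
    {X : Type*} [MeasurableSpace X] (μ : Measure X) [IsProbabilityMeasure μ]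
    (T : (Π₀ i : I, ZMod (q i)) → X → X)
    (hT : ∀ g, MeasurePreserving (T g) μ μ)
    (hT0 : T 0 = id) (hTadd : ∀ g g', T (g + g') = T g ∘ T g')
    (herg : IsErgodicAction T μ)
    (k : ℕ) (F : X → Circle) (hFmeas : Measurable F)
    (hFpoly : PhasePoly T μ k F)
    (j : ℕ) (pr : Fin j → ℕ) (hpr : ∀ i, (pr i).Prime)
    (hdist : Function.Injective pr) (hbig : ∀ i, k < pr i)
    (n : ℕ) (hn : n = ∏ i, pr i)
    (hval : ∀ᵐ x ∂μ, F x ^ n = 1) :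
    ∀ g, ∀ᵐ x ∂μ, ∏ t ∈ Finset.range n, F ((T g)^[t] x) = 1 := by
  intro g
  have hpos : 0 < n := hn ▸ Finset.prod_pos fun i _ => (hpr i).pos
  have hdvd : ∀ m < k, n ∣ n.choose (m + 1) := by
    intro m hm
    have hcop : n.Coprime (m + 1) := by
      rw [hn]
      apply Nat.Coprime.prod_left
      intro i _
      exact (hpr i).coprime_iff_not_dvd.mpr fun hd =>
        absurd (Nat.le_of_dvd m.succ_pos hd) (not_le.2 (lt_of_le_of_lt hm (hbig i)))
    obtain ⟨s, rfl⟩ := Nat.exists_eq_succ_of_ne_zero hpos.ne'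
    exact hcop.dvd_of_dvd_mul_right
      ⟨s.choose m, by rw [← Nat.add_one_mul_choose_eq]⟩
  filter_upwards [taylor T hT k F g hFpoly,
    ae_all_iff.2 (pow_n_iter T hT F n hval g)] with x hx hpow
  calc ∏ t ∈ Finset.range n, F ((T g)^[t] x)
      = ∏ t ∈ Finset.range n, ∏ m ∈ Finset.range k, ((Dd (T g))^[m] F) x ^ t.choose m :=
        Finset.prod_congr rfl fun t _ => hx t
    _ = ∏ m ∈ Finset.range k, ((Dd (T g))^[m] F) x ^ ∑ t ∈ Finset.range n, t.choose m := by
        rw [Finset.prod_comm]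
        exact Finset.prod_congr rfl fun m _ => Finset.prod_pow_eq_pow_sum _ _ _
    _ = 1 := by
        apply Finset.prod_eq_one
        intro m hm
        obtain ⟨c, hc⟩ := hdvd m (Finset.mem_range.1 hm)
        rw [hockey m n, hc, pow_mul, hpow m, one_pow]
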